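/- For all real b, c > -1, the partial products ∏_{n=1}^{N} [((n+b)(n+(b+1)/2)(n+c/2)) / ((n+c)(n+(c+1)/2)(n+b/2))]^{u_n} converge as N → ∞ to (c+1)/(b+1). -/

import Mathlib

open Filter Finset Topology

/-- The Thue–Morse sequence with values `±1`: `u n = (-1)^(s₂ n)` where `s₂ n`
is the sum of the binary digits of `n`. -/
def u (n : ℕ) : ℤ := (-1) ^ (Nat.digits 2 n).sum


noncomputable def g (a x : ℝ) : ℝ :=
  Real.log (a + x) + Real.log (2*a + x + 1) - Real.log (2*a + x)

noncomputable def Psi (N : ℕ) (x : ℝ) : ℝ :=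
  (∑ n ∈ Finset.Icc 1 N, (u n : ℝ) * g n x) + Real.log (1 + x)

lemma Psi_succ (N : ℕ) (x : ℝ) :
    Psi (N+1) x = Psi N x + (u (N+1) : ℝ) * g (N+1 : ℕ) x := by
  unfold Psi
  rw [Finset.sum_Icc_succ_top (by omega : 1 ≤ N + 1)]
  ring

lemma u_even (m : ℕ) : u (2*m) = u m := by
  rcases Nat.eq_zero_or_pos m with rfl | hm
  · rfl
  · unfold u
    rw [Nat.digits_def' (by norm_num) (by omega)]
    have h1 : (2*m) % 2 = 0 := by omega
    have h2 : (2*m) / 2 = m := by omega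
    rw [h1, h2]; simp

lemma u_odd (m : ℕ) : u (2*m+1) = -u m := by
  unfold u
  rw [Nat.digits_def' (by norm_num) (by omega)]
  have h1 : (2*m+1) % 2 = 1 := by omega
  have h2 : (2*m+1) / 2 = m := by omega
  rw [h1, h2]; simp [pow_add, pow_succ]

lemma gkey {a x : ℝ} (ha : 1 ≤ a) (hx : -1 < x) :
    g (2*a) x - g (2*a+1) x = g a (x/2) - g a ((x+1)/2) := by
  unfold g
  rw [show a + x/2 = (2*a + x)/2 by ring,
      show 2*a + x/2 + 1 = (4*a + x + 2)/2 by ring,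
      show 2*a + x/2 = (4*a + x)/2 by ring,
      show a + (x+1)/2 = (2*a + x + 1)/2 by ring,
      show 2*a + (x+1)/2 + 1 = (4*a + x + 3)/2 by ring,
      show 2*a + (x+1)/2 = (4*a + x + 1)/2 by ring,
      Real.log_div (by linarith : (0:ℝ) < 2*a + x).ne' (by norm_num),
      Real.log_div (by linarith : (0:ℝ) < 4*a + x + 2).ne' (by norm_num),
      Real.log_div (by linarith : (0:ℝ) < 4*a + x).ne' (by norm_num),
      Real.log_div (by linarith : (0:ℝ) < 2*a + x + 1).ne' (by norm_num),
      Real.log_div (by linarith : (0:ℝ) < 4*a + x + 3).ne' (by norm_num),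
      Real.log_div (by linarith : (0:ℝ) < 4*a + x + 1).ne' (by norm_num)]
  rw [show 2*(2*a) + x + 1 = 4*a + x + 1 by ring,
      show 2*(2*a) + x = 4*a + x by ring,
      show 2*(2*a+1) + x + 1 = 4*a + x + 3 by ring,
      show 2*(2*a+1) + x = 4*a + x + 2 by ring]
  ring

lemma psi_rec (N : ℕ) {x : ℝ} (hx : -1 < x) :
    Psi (2*N+1) x = Psi N (x/2) - Psi N ((x+1)/2) := by
  induction N with
  | zero =>
    have h0 : ∀ y : ℝ, Psi 0 y = Real.log (1 + y) := by
      intro y; unfold Psi; simp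
    have h1 : Psi 1 x = (u 1 : ℝ) * g (1:ℕ) x + Real.log (1+x) := by
      unfold Psi; simp
    rw [h0, h0, h1]
    have hu1 : u 1 = -1 := by simpa [u_even, show u 0 = 1 from by simp [u]] using u_odd 0
    rw [hu1]
    unfold g
    push_cast
    rw [show (1:ℝ) + x/2 = (x+2)/2 by ring,
        show (1:ℝ) + (x+1)/2 = (x+3)/2 by ring,
        Real.log_div (by linarith : (0:ℝ) < x+2).ne' (by norm_num),
        Real.log_div (by linarith : (0:ℝ) < x+3).ne' (by norm_num)]
    rw [show 2*(1:ℝ) + x + 1 = x + 3 by ring, show 2*(1:ℝ) + x = x + 2 by ring]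
    ring
  | succ N IH =>
    have ha : (1:ℝ) ≤ ((N:ℝ) + 1) := by have := Nat.cast_nonneg (α:=ℝ) N; linarith
    have hk := gkey (a := ((N:ℝ) + 1)) ha hx
    have A1 := Psi_succ (2*N+1) x
    have A2 := Psi_succ (2*N+1+1) x
    have B1 := Psi_succ N (x/2)
    have B2 := Psi_succ N ((x+1)/2)
    have eu1 : u (2*N+1+1) = u (N+1) := by rw [show 2*N+1+1 = 2*(N+1) by omega, u_even]
    have eu2 : u (2*N+1+1+1) = -u (N+1) := by rw [show 2*N+1+1+1 = 2*(N+1)+1 by omega, u_odd]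
    have c1 : ((2*N+1+1 : ℕ) : ℝ) = 2*((N:ℝ) + 1) := by push_cast; ring
    have c2 : ((2*N+1+1+1 : ℕ) : ℝ) = 2*((N:ℝ) + 1) + 1 := by push_cast; ring
    have c3 : ((N+1 : ℕ) : ℝ) = (N:ℝ) + 1 := by push_cast; ring
    rw [eu1, c1] at A1
    rw [eu2, c2] at A2
    rw [c3] at B1 B2
    rw [show 2*(N+1)+1 = 2*N+1+1+1 by omega]
    push_cast at A1 A2 B1 B2 IH hk ⊢
    linear_combination A2 + A1 + IH + (u (N+1) : ℝ) * hk - B1 + B2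

noncomputable def g1 (a x : ℝ) : ℝ := 1/(a + x) + 1/(2*a + x + 1) - 1/(2*a + x)

noncomputable def g2 (a x : ℝ) : ℝ :=
  -(1/(a + x)^2) - 1/(2*a + x + 1)^2 + 1/(2*a + x)^2

noncomputable def Phi (N : ℕ) (x : ℝ) : ℝ :=
  (∑ n ∈ Finset.Icc 1 N, (u n : ℝ) * g1 n x) + 1/(1 + x)

noncomputable def Theta (N : ℕ) (x : ℝ) : ℝ :=
  (∑ n ∈ Finset.Icc 1 N, (u n : ℝ) * g2 n x) - 1/(1 + x)^2

lemma Phi_succ (N : ℕ) (x : ℝ) :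
    Phi (N+1) x = Phi N x + (u (N+1) : ℝ) * g1 (N+1 : ℕ) x := by
  unfold Phi
  rw [Finset.sum_Icc_succ_top (by omega : 1 ≤ N + 1)]
  ring

lemma Theta_succ (N : ℕ) (x : ℝ) :
    Theta (N+1) x = Theta N x + (u (N+1) : ℝ) * g2 (N+1 : ℕ) x := by
  unfold Theta
  rw [Finset.sum_Icc_succ_top (by omega : 1 ≤ N + 1)]
  ring

lemma g1key (a x : ℝ) :
    g1 (2*a) x - g1 (2*a+1) x = (1/2) * (g1 a (x/2) - g1 a ((x+1)/2)) := by
  unfold g1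
  rw [show a + x/2 = (2*a + x)/2 by ring,
      show 2*a + x/2 + 1 = (4*a + x + 2)/2 by ring,
      show 2*a + x/2 = (4*a + x)/2 by ring,
      show a + (x+1)/2 = (2*a + x + 1)/2 by ring,
      show 2*a + (x+1)/2 + 1 = (4*a + x + 3)/2 by ring,
      show 2*a + (x+1)/2 = (4*a + x + 1)/2 by ring,
      one_div_div, one_div_div, one_div_div, one_div_div, one_div_div, one_div_div]
  rw [show 2*(2*a) + x + 1 = 4*a + x + 1 by ring,
      show 2*(2*a) + x = 4*a + x by ring,
      show 2*(2*a+1) + x + 1 = 4*a + x + 3 by ring,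
      show 2*(2*a+1) + x = 4*a + x + 2 by ring]
  ring

lemma g2key (a x : ℝ) :
    g2 (2*a) x - g2 (2*a+1) x = (1/4) * (g2 a (x/2) - g2 a ((x+1)/2)) := by
  unfold g2
  rw [show a + x/2 = (2*a + x)/2 by ring,
      show 2*a + x/2 + 1 = (4*a + x + 2)/2 by ring,
      show 2*a + x/2 = (4*a + x)/2 by ring,
      show a + (x+1)/2 = (2*a + x + 1)/2 by ring,
      show 2*a + (x+1)/2 + 1 = (4*a + x + 3)/2 by ring,
      show 2*a + (x+1)/2 = (4*a + x + 1)/2 by ring]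
  rw [div_pow, div_pow, div_pow, div_pow, div_pow, div_pow,
      one_div_div, one_div_div, one_div_div, one_div_div, one_div_div, one_div_div]
  rw [show 2*(2*a) + x + 1 = 4*a + x + 1 by ring,
      show 2*(2*a) + x = 4*a + x by ring,
      show 2*(2*a+1) + x + 1 = 4*a + x + 3 by ring,
      show 2*(2*a+1) + x = 4*a + x + 2 by ring]
  ring

lemma phi_rec (N : ℕ) (x : ℝ) :
    Phi (2*N+1) x = (1/2) * (Phi N (x/2) - Phi N ((x+1)/2)) := by
  induction N with
  | zero =>
    have h0 : ∀ y : ℝ, Phi 0 y = 1/(1 + y) := by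
      intro y; unfold Phi; simp
    have h1 : Phi 1 x = (u 1 : ℝ) * g1 (1:ℕ) x + 1/(1+x) := by
      unfold Phi; simp
    rw [h0, h0, h1]
    have hu1 : u 1 = -1 := by simpa [u_even, show u 0 = 1 from by simp [u]] using u_odd 0
    rw [hu1]
    unfold g1
    push_cast
    rw [show (1:ℝ) + x/2 = (x+2)/2 by ring,
        show (1:ℝ) + (x+1)/2 = (x+3)/2 by ring,
        one_div_div, one_div_div]
    rw [show 2*(1:ℝ) + x + 1 = x + 3 by ring, show 2*(1:ℝ) + x = x + 2 by ring]
    ring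
  | succ N IH =>
    have hk := g1key ((N:ℝ) + 1) x
    have A1 := Phi_succ (2*N+1) x
    have A2 := Phi_succ (2*N+1+1) x
    have B1 := Phi_succ N (x/2)
    have B2 := Phi_succ N ((x+1)/2)
    have eu1 : u (2*N+1+1) = u (N+1) := by rw [show 2*N+1+1 = 2*(N+1) by omega, u_even]
    have eu2 : u (2*N+1+1+1) = -u (N+1) := by rw [show 2*N+1+1+1 = 2*(N+1)+1 by omega, u_odd]
    have c1 : ((2*N+1+1 : ℕ) : ℝ) = 2*((N:ℝ) + 1) := by push_cast; ring
    have c2 : ((2*N+1+1+1 : ℕ) : ℝ) = 2*((N:ℝ) + 1) + 1 := by push_cast; ring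
    have c3 : ((N+1 : ℕ) : ℝ) = (N:ℝ) + 1 := by push_cast; ring
    rw [eu1, c1] at A1
    rw [eu2, c2] at A2
    rw [c3] at B1 B2
    rw [show 2*(N+1)+1 = 2*N+1+1+1 by omega]
    push_cast at A1 A2 B1 B2 IH hk ⊢
    linear_combination A2 + A1 + IH + (1/2) * (u (N+1) : ℝ) * hk * 2 - (1/2) * B1 + (1/2) * B2
  
lemma theta_rec (N : ℕ) (x : ℝ) :
    Theta (2*N+1) x = (1/4) * (Theta N (x/2) - Theta N ((x+1)/2)) := by
  induction N with
  | zero =>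
    have h0 : ∀ y : ℝ, Theta 0 y = -(1/(1 + y)^2) := by
      intro y; unfold Theta; simp
    have h1 : Theta 1 x = (u 1 : ℝ) * g2 (1:ℕ) x - 1/(1+x)^2 := by
      unfold Theta; simp
    rw [h0, h0, h1]
    have hu1 : u 1 = -1 := by simpa [u_even, show u 0 = 1 from by simp [u]] using u_odd 0
    rw [hu1]
    unfold g2
    push_cast
    rw [show (1:ℝ) + x/2 = (x+2)/2 by ring,
        show (1:ℝ) + (x+1)/2 = (x+3)/2 by ring,
        div_pow, div_pow, one_div_div, one_div_div]
    rw [show 2*(1:ℝ) + x + 1 = x + 3 by ring, show 2*(1:ℝ) + x = x + 2 by ring]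
    ring
  | succ N IH =>
    have hk := g2key ((N:ℝ) + 1) x
    have A1 := Theta_succ (2*N+1) x
    have A2 := Theta_succ (2*N+1+1) x
    have B1 := Theta_succ N (x/2)
    have B2 := Theta_succ N ((x+1)/2)
    have eu1 : u (2*N+1+1) = u (N+1) := by rw [show 2*N+1+1 = 2*(N+1) by omega, u_even]
    have eu2 : u (2*N+1+1+1) = -u (N+1) := by rw [show 2*N+1+1+1 = 2*(N+1)+1 by omega, u_odd]
    have c1 : ((2*N+1+1 : ℕ) : ℝ) = 2*((N:ℝ) + 1) := by push_cast; ring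
    have c2 : ((2*N+1+1+1 : ℕ) : ℝ) = 2*((N:ℝ) + 1) + 1 := by push_cast; ring
    have c3 : ((N+1 : ℕ) : ℝ) = (N:ℝ) + 1 := by push_cast; ring
    rw [eu1, c1] at A1
    rw [eu2, c2] at A2
    rw [c3] at B1 B2
    rw [show 2*(N+1)+1 = 2*N+1+1+1 by omega]
    push_cast at A1 A2 B1 B2 IH hk ⊢
    linear_combination A2 + A1 + IH + (u (N+1) : ℝ) * hk - (1/4) * B1 + (1/4) * B2

lemma hasDeriv_g {a x : ℝ} (ha : 1 ≤ a) (hx : -1 < x) :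
    HasDerivAt (g a) (g1 a x) x := by
  have p1 : (0:ℝ) < a + x := by linarith
  have p2 : (0:ℝ) < 2*a + x + 1 := by linarith
  have p3 : (0:ℝ) < 2*a + x := by linarith
  have h1 : HasDerivAt (fun y : ℝ => a + y) 1 x := (hasDerivAt_id x).const_add a
  have h2 : HasDerivAt (fun y : ℝ => 2*a + y + 1) 1 x :=
    ((hasDerivAt_id x).const_add (2*a)).add_const 1
  have h3 : HasDerivAt (fun y : ℝ => 2*a + y) 1 x := (hasDerivAt_id x).const_add (2*a)
  have H := (((h1.log p1.ne').add (h2.log p2.ne')).sub (h3.log p3.ne'))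
  unfold g g1
  exact H

lemma hasDeriv_g1 {a x : ℝ} (ha : 1 ≤ a) (hx : -1 < x) :
    HasDerivAt (g1 a) (g2 a x) x := by
  have p1 : (0:ℝ) < a + x := by linarith
  have p2 : (0:ℝ) < 2*a + x + 1 := by linarith
  have p3 : (0:ℝ) < 2*a + x := by linarith
  have h1 : HasDerivAt (fun y : ℝ => a + y) 1 x := (hasDerivAt_id x).const_add a
  have h2 : HasDerivAt (fun y : ℝ => 2*a + y + 1) 1 x :=
    ((hasDerivAt_id x).const_add (2*a)).add_const 1
  have h3 : HasDerivAt (fun y : ℝ => 2*a + y) 1 x := (hasDerivAt_id x).const_add (2*a)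
  have H := ((h1.inv p1.ne').add (h2.inv p2.ne')).sub (h3.inv p3.ne')
  unfold g1 g2
  simp only [one_div]
  refine H.congr_deriv ?_
  ring

lemma hasDeriv_Psi (N : ℕ) {x : ℝ} (hx : -1 < x) :
    HasDerivAt (Psi N) (Phi N x) x := by
  have hlog : HasDerivAt (fun y : ℝ => Real.log (1 + y)) (1/(1+x)) x := by
    have h1 : HasDerivAt (fun y : ℝ => 1 + y) 1 x := (hasDerivAt_id x).const_add 1
    simpa using h1.log (by linarith : (0:ℝ) < 1 + x).ne'
  have hsum : HasDerivAt (fun y : ℝ => ∑ n ∈ Finset.Icc 1 N, (u n : ℝ) * g n y)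
      (∑ n ∈ Finset.Icc 1 N, (u n : ℝ) * g1 n x) x := by
    apply HasDerivAt.fun_sum
    intro n hn
    have hn1 : (1:ℝ) ≤ (n:ℝ) := by
      exact_mod_cast (Finset.mem_Icc.mp hn).1
    exact (hasDeriv_g hn1 hx).const_mul ((u n : ℝ))
  unfold Psi Phi
  exact hsum.add hlog

lemma hasDeriv_Phi (N : ℕ) {x : ℝ} (hx : -1 < x) :
    HasDerivAt (Phi N) (Theta N x) x := by
  have h1 : HasDerivAt (fun y : ℝ => 1 + y) 1 x := (hasDerivAt_id x).const_add 1
  have hinv : HasDerivAt (fun y : ℝ => 1/(1 + y)) (-(1/(1+x)^2)) x := by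
    simp only [one_div]
    have := h1.inv (by linarith : (0:ℝ) < 1 + x).ne'
    refine this.congr_deriv ?_
    ring
  have hsum : HasDerivAt (fun y : ℝ => ∑ n ∈ Finset.Icc 1 N, (u n : ℝ) * g1 n y)
      (∑ n ∈ Finset.Icc 1 N, (u n : ℝ) * g2 n x) x := by
    apply HasDerivAt.fun_sum
    intro n hn
    have hn1 : (1:ℝ) ≤ (n:ℝ) := by
      exact_mod_cast (Finset.mem_Icc.mp hn).1
    exact (hasDeriv_g1 hn1 hx).const_mul ((u n : ℝ))
  unfold Phi Theta
  refine (hsum.add hinv).congr_deriv ?_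
  ring

lemma u_pm (n : ℕ) : u n = 1 ∨ u n = -1 := by
  unfold u
  rcases Nat.even_or_odd ((Nat.digits 2 n).sum) with h | h
  · left; exact h.neg_one_pow
  · right; exact h.neg_one_pow

lemma u_abs (n : ℕ) : |(u n : ℝ)| = 1 := by
  rcases u_pm n with h | h <;> rw [h] <;> norm_num

lemma g1_bound {a x : ℝ} (ha : 1 ≤ a) (hx : -1 < x) : |g1 a x| ≤ 3/(a+x) := by
  have p1 : (0:ℝ) < a + x := by linarith
  have p2 : (0:ℝ) < 2*a + x + 1 := by linarith
  have p3 : (0:ℝ) < 2*a + x := by linarith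
  have e2 : 1/(2*a+x+1) ≤ 1/(a+x) := one_div_le_one_div_of_le p1 (by linarith)
  have e3 : 1/(2*a+x) ≤ 1/(a+x) := one_div_le_one_div_of_le p1 (by linarith)
  have q1 : 0 < 1/(a+x) := by positivity
  have q2 : 0 < 1/(2*a+x+1) := by positivity
  have q3 : 0 < 1/(2*a+x) := by positivity
  unfold g1
  rw [abs_le]
  constructor <;> [skip; skip] <;>
  · rw [show (3:ℝ)/(a+x) = 3 * (1/(a+x)) by ring] at *
    linarith

lemma g2_bound {a x : ℝ} (ha : 1 ≤ a) (hx : -1 < x) : |g2 a x| ≤ 3/(a+x)^2 := by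
  have p1 : (0:ℝ) < a + x := by linarith
  have p2 : (0:ℝ) < 2*a + x + 1 := by linarith
  have p3 : (0:ℝ) < 2*a + x := by linarith
  have s1 : (0:ℝ) < (a+x)^2 := by positivity
  have e2 : 1/(2*a+x+1)^2 ≤ 1/(a+x)^2 := by
    apply one_div_le_one_div_of_le s1
    nlinarith
  have e3 : 1/(2*a+x)^2 ≤ 1/(a+x)^2 := by
    apply one_div_le_one_div_of_le s1
    nlinarith
  have q1 : 0 < 1/(a+x)^2 := by positivity
  have q2 : 0 < 1/(2*a+x+1)^2 := by positivity
  have q3 : 0 < 1/(2*a+x)^2 := by positivity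
  unfold g2
  rw [abs_le]
  constructor <;>
  · rw [show (3:ℝ)/(a+x)^2 = 3 * (1/(a+x)^2) by ring] at *
    linarith

section Bounds

variable {δ K : ℝ} (hδ0 : 0 < δ) (hδ1 : δ ≤ 1) (hK : 1 ≤ K)

lemma mem_neg_one_lt (hδ0 : 0 < δ) {x : ℝ} (hx : x ∈ Set.Icc (δ-1) K) : -1 < x := by
  have := hx.1; linarith

lemma half_mem (hδ0 : 0 < δ) (hδ1 : δ ≤ 1) (hK : 1 ≤ K) {x : ℝ}
    (hx : x ∈ Set.Icc (δ-1) K) : x/2 ∈ Set.Icc (δ-1) K := by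
  obtain ⟨h1, h2⟩ := hx
  constructor <;> [linarith; linarith]

lemma half_mem' (hδ0 : 0 < δ) (hδ1 : δ ≤ 1) (hK : 1 ≤ K) {x : ℝ}
    (hx : x ∈ Set.Icc (δ-1) K) : (x+1)/2 ∈ Set.Icc (δ-1) K := by
  obtain ⟨h1, h2⟩ := hx
  constructor <;> [linarith; linarith]

lemma theta_bound (hδ0 : 0 < δ) (hδ1 : δ ≤ 1) (hK : 1 ≤ K) :
    ∀ N : ℕ, ∀ x ∈ Set.Icc (δ-1) K, |Theta N x| ≤ (12 + 1/δ^2) / (N+1) := by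
  intro N
  induction N using Nat.strong_induction_on with
  | _ N IH =>
  intro x hx
  have hxm : -1 < x := mem_neg_one_lt hδ0 hx
  have hA0 : (0:ℝ) < 12 + 1/δ^2 := by positivity
  have hA12 : (12:ℝ) ≤ 12 + 1/δ^2 := by
    have : (0:ℝ) ≤ 1/δ^2 := by positivity
    linarith
  rcases Nat.even_or_odd' N with ⟨m, rfl | rfl⟩
  · rcases Nat.eq_zero_or_pos m with rfl | hm
    · have h0 : Theta (2*0) x = -(1/(1+x)^2) := by unfold Theta; simp
      have hp : (0:ℝ) < 1 + x := by linarith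
      rw [h0, abs_neg, abs_of_pos (one_div_pos.mpr (pow_pos hp 2))]
      have hd : δ^2 ≤ (1+x)^2 := by nlinarith [hx.1]
      have h1 : 1/(1+x)^2 ≤ 1/δ^2 := one_div_le_one_div_of_le (by positivity) hd
      have hden : ((2*0 : ℕ):ℝ) + 1 = 1 := by norm_num
      rw [hden, div_one]
      linarith
    · have ht0 : (0:ℝ) < (m:ℝ) := by exact_mod_cast hm
      have hm1 : (1:ℝ) ≤ (m:ℝ) := by exact_mod_cast hm
      have hrec := theta_rec m x
      have hsucc := Theta_succ (2*m) x
      have key : Theta (2*m) x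
          = (1/4)*(Theta m (x/2) - Theta m ((x+1)/2))
            - (u (2*m+1) : ℝ) * g2 ((2*m+1 : ℕ) : ℝ) x := by
        linear_combination hrec - hsucc
      have B1 := IH m (by omega) _ (half_mem hδ0 hδ1 hK hx)
      have B2 := IH m (by omega) _ (half_mem' hδ0 hδ1 hK hx)
      have hcast : ((2*m+1 : ℕ) : ℝ) = 2*(m:ℝ)+1 := by push_cast; ring
      have hg2 : |g2 ((2*m+1 : ℕ) : ℝ) x| ≤ 3/(2*(m:ℝ))^2 := by
        rw [hcast]
        refine le_trans (g2_bound (by linarith) hxm) ?_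
        rw [div_le_div_iff₀ (by nlinarith [hx.1]) (by nlinarith)]
        nlinarith [hx.1]
      have hgu : |(u (2*m+1) : ℝ) * g2 ((2*m+1 : ℕ) : ℝ) x| ≤ 3/(2*(m:ℝ))^2 := by
        rw [abs_mul, u_abs, one_mul]; exact hg2
      have harith : (1/4)*((12 + 1/δ^2)/((m:ℝ)+1) + (12 + 1/δ^2)/((m:ℝ)+1)) + 3/(2*(m:ℝ))^2
          ≤ (12 + 1/δ^2)/(2*(m:ℝ)+1) := by
        have hne1 : ((m:ℝ)+1) ≠ 0 := by positivity
        have hne2 : (2*(m:ℝ)+1) ≠ 0 := by positivity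
        have hne3 : (2*(m:ℝ)+2) ≠ 0 := by positivity
        have e1 : (12 + 1/δ^2)/(2*(m:ℝ)+1)
            - (1/4)*((12 + 1/δ^2)/((m:ℝ)+1) + (12 + 1/δ^2)/((m:ℝ)+1))
            = (12 + 1/δ^2)/((2*(m:ℝ)+1)*(2*(m:ℝ)+2)) := by
          field_simp
          ring
        have e2 : 3/((2*(m:ℝ))^2) ≤ (12 + 1/δ^2)/((2*(m:ℝ)+1)*(2*(m:ℝ)+2)) := by
          have hq : (0:ℝ) ≤ 1/δ^2 := by positivity
          rw [div_le_div_iff₀ (by positivity) (by positivity)]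
          nlinarith [mul_nonneg hq (sq_nonneg (2*(m:ℝ))),
            mul_nonneg (sub_nonneg.mpr hm1) ht0.le, sq_nonneg ((m:ℝ)-1)]
        linarith
      have hc2 : ((2*m : ℕ) : ℝ) + 1 = 2*(m:ℝ)+1 := by push_cast; ring
      rw [hc2, key]
      have t1 := abs_le.mp B1
      have t2 := abs_le.mp B2
      have t3 := abs_le.mp hgu
      rw [abs_le]
      constructor <;>
        linarith [harith, t1.1, t1.2, t2.1, t2.2, t3.1, t3.2]
  · have ht0 : (0:ℝ) ≤ (m:ℝ) := Nat.cast_nonneg m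
    have hrec := theta_rec m x
    have B1 := IH m (by omega) _ (half_mem hδ0 hδ1 hK hx)
    have B2 := IH m (by omega) _ (half_mem' hδ0 hδ1 hK hx)
    have hc2 : ((2*m+1 : ℕ) : ℝ) + 1 = 2*((m:ℝ)+1) := by push_cast; ring
    rw [hc2, hrec]
    have hne : ((m:ℝ)+1) ≠ 0 := by positivity
    have e1 : (12 + 1/δ^2)/(2*((m:ℝ)+1)) = (1/2) * ((12 + 1/δ^2)/((m:ℝ)+1)) := by
      conv_rhs => rw [mul_comm, div_mul_div_comm, mul_one]
      rw [mul_comm ((m:ℝ)+1) 2]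
    rw [e1]
    have t1 := abs_le.mp B1
    have t2 := abs_le.mp B2
    clear IH hrec B1 B2 hc2 e1 hx
    rw [abs_le]
    constructor <;> [linarith; linarith]

lemma phi_diff (hδ0 : 0 < δ) (hδ1 : δ ≤ 1) (hK : 1 ≤ K) (m : ℕ) {y z : ℝ}
    (hy : y ∈ Set.Icc (δ-1) K) (hz : z ∈ Set.Icc (δ-1) K) :
    |Phi m z - Phi m y| ≤ ((12 + 1/δ^2)/((m:ℝ)+1)) * |z - y| := by
  have H := (convex_Icc (δ-1) K).norm_image_sub_le_of_norm_hasDerivWithin_le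
    (f := Phi m) (f' := Theta m) (C := (12 + 1/δ^2)/((m:ℝ)+1))
    (fun w hw => (hasDeriv_Phi m (mem_neg_one_lt hδ0 hw)).hasDerivWithinAt)
    (fun w hw => by rw [Real.norm_eq_abs]; exact theta_bound hδ0 hδ1 hK m w hw)
    hy hz
  simpa [Real.norm_eq_abs] using H

lemma psi_diff (hδ0 : 0 < δ) (hδ1 : δ ≤ 1) (hK : 1 ≤ K) (N : ℕ) {C : ℝ}
    (hC : ∀ w ∈ Set.Icc (δ-1) K, |Phi N w| ≤ C) {y z : ℝ}
    (hy : y ∈ Set.Icc (δ-1) K) (hz : z ∈ Set.Icc (δ-1) K) :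
    |Psi N z - Psi N y| ≤ C * |z - y| := by
  have H := (convex_Icc (δ-1) K).norm_image_sub_le_of_norm_hasDerivWithin_le
    (f := Psi N) (f' := Phi N) (C := C)
    (fun w hw => (hasDeriv_Psi N (mem_neg_one_lt hδ0 hw)).hasDerivWithinAt)
    (fun w hw => by rw [Real.norm_eq_abs]; exact hC w hw)
    hy hz
  simpa [Real.norm_eq_abs] using H

lemma phi_odd (hδ0 : 0 < δ) (hδ1 : δ ≤ 1) (hK : 1 ≤ K) (m : ℕ) {x : ℝ}
    (hx : x ∈ Set.Icc (δ-1) K) :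
    |Phi (2*m+1) x| ≤ (1/4) * ((12 + 1/δ^2)/((m:ℝ)+1)) := by
  rw [phi_rec m x]
  have hd := phi_diff hδ0 hδ1 hK m (half_mem hδ0 hδ1 hK hx) (half_mem' hδ0 hδ1 hK hx)
  have e : (x+1)/2 - x/2 = (1/2 : ℝ) := by ring
  rw [e] at hd
  have habs : |(1/2 : ℝ)| = 1/2 := by norm_num
  rw [habs] at hd
  rw [abs_mul, abs_sub_comm]
  have h12 : |(1/2 : ℝ)| = 1/2 := by norm_num
  rw [h12]
  nlinarith [abs_nonneg (Phi m ((x+1)/2) - Phi m (x/2))]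

lemma phi_bound (hδ0 : 0 < δ) (hδ1 : δ ≤ 1) (hK : 1 ≤ K) (N : ℕ) (hN : 1 ≤ N) {x : ℝ}
    (hx : x ∈ Set.Icc (δ-1) K) :
    |Phi N x| ≤ ((12 + 1/δ^2) + 6)/(N:ℝ) := by
  have hxm : -1 < x := mem_neg_one_lt hδ0 hx
  have hA0 : (0:ℝ) < 12 + 1/δ^2 := by positivity
  rcases Nat.even_or_odd' N with ⟨m, rfl | rfl⟩
  · -- N = 2*m, m ≥ 1
    have hm : 1 ≤ m := by omega
    have ht0 : (1:ℝ) ≤ (m:ℝ) := by exact_mod_cast hm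
    have hsucc := Phi_succ (2*m) x
    have key : Phi (2*m) x = Phi (2*m+1) x - (u (2*m+1) : ℝ) * g1 ((2*m+1 : ℕ) : ℝ) x := by
      linear_combination -hsucc
    have h1 : |Phi (2*m+1) x| ≤ (1/4) * ((12 + 1/δ^2)/((m:ℝ)+1)) := phi_odd hδ0 hδ1 hK m hx
    have hcast : ((2*m+1 : ℕ) : ℝ) = 2*(m:ℝ)+1 := by push_cast; ring
    have hg1 : |g1 ((2*m+1 : ℕ) : ℝ) x| ≤ 3/(2*(m:ℝ)) := by
      rw [hcast]
      refine le_trans (g1_bound (by linarith) hxm) ?_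
      rw [div_le_div_iff₀ (by nlinarith [hx.1]) (by nlinarith)]
      nlinarith [hx.1]
    have hgu : |(u (2*m+1) : ℝ) * g1 ((2*m+1 : ℕ) : ℝ) x| ≤ 3/(2*(m:ℝ)) := by
      rw [abs_mul, u_abs, one_mul]; exact hg1
    have hc2 : ((2*m : ℕ) : ℝ) = 2*(m:ℝ) := by push_cast; ring
    rw [hc2, key]
    have harith : (1/4) * ((12 + 1/δ^2)/((m:ℝ)+1)) + 3/(2*(m:ℝ))
        ≤ ((12 + 1/δ^2) + 6)/(2*(m:ℝ)) := by
      have e1 : (1/4) * ((12 + 1/δ^2)/((m:ℝ)+1)) ≤ (12 + 1/δ^2)/(2*(m:ℝ))/2 := by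
        rw [div_div, mul_comm, div_mul_div_comm, mul_one, div_le_div_iff₀ (by nlinarith) (by nlinarith)]
        nlinarith
      have hm2 : (0:ℝ) < 2*(m:ℝ) := by nlinarith
      have e2 : 3/(2*(m:ℝ)) = (6/(2*(m:ℝ)))/2 := by
        rw [div_div, div_eq_div_iff hm2.ne' (by positivity : (2*(m:ℝ)*2) ≠ 0)]
        ring
      have e3 : ((12 + 1/δ^2) + 6)/(2*(m:ℝ)) = (12 + 1/δ^2)/(2*(m:ℝ)) + 6/(2*(m:ℝ)) := by
        rw [add_div]
      have e4 : (0:ℝ) < 6/(2*(m:ℝ)) := by positivity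
      have e5 : (0:ℝ) < (12 + 1/δ^2)/(2*(m:ℝ)) := by positivity
      rw [e3]
      rw [e2] at *
      linarith
    have t1 := abs_le.mp h1
    have t3 := abs_le.mp hgu
    rw [abs_le]
    constructor <;> linarith [harith, t1.1, t1.2, t3.1, t3.2]
  · -- N = 2*m+1
    have h1 := phi_odd hδ0 hδ1 hK m hx
    refine le_trans h1 ?_
    have hm0 : (0:ℝ) ≤ (m:ℝ) := Nat.cast_nonneg m
    have hc : ((2*m+1 : ℕ) : ℝ) = 2*(m:ℝ)+1 := by push_cast; ring
    rw [hc, mul_comm, div_mul_div_comm, mul_one, div_le_div_iff₀ (by nlinarith) (by nlinarith)]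
    have hq : (0:ℝ) ≤ 1/δ^2 := by positivity
    nlinarith

end Bounds

/-- For `b, c > -1`, the partial products
`∏_{n=1}^{N} [((n+b)(n+(b+1)/2)(n+c/2)) / ((n+c)(n+(c+1)/2)(n+b/2))]^{u_n}`
converge to `(c+1)/(b+1)`. -/
theorem stmt_14 (b c : ℝ) (hb : -1 < b) (hc : -1 < c) :
    Tendsto (fun N : ℕ => ∏ n ∈ Finset.Icc 1 N,
      ((((n : ℝ) + b) * ((n : ℝ) + (b + 1) / 2) * ((n : ℝ) + c / 2)) /
        (((n : ℝ) + c) * ((n : ℝ) + (c + 1) / 2) * ((n : ℝ) + b / 2))) ^ (u n))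
      atTop (𝓝 ((c + 1) / (b + 1))) := by
  have hb1 : (0:ℝ) < b + 1 := by linarith
  have hc1 : (0:ℝ) < c + 1 := by linarith
  set δ : ℝ := min (min (b+1) (c+1)) 1 with hδdef
  set K : ℝ := max (max b c) 1 with hKdef
  have hδ0 : 0 < δ := lt_min (lt_min hb1 hc1) one_pos
  have hδ1 : δ ≤ 1 := min_le_right _ _
  have hK1 : (1:ℝ) ≤ K := le_max_right _ _
  have hbS : b ∈ Set.Icc (δ-1) K := by
    constructor
    · have : δ ≤ b+1 := le_trans (min_le_left _ _) (min_le_left _ _)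
      linarith
    · exact le_trans (le_max_left b c) (le_max_left _ 1)
  have hcS : c ∈ Set.Icc (δ-1) K := by
    constructor
    · have : δ ≤ c+1 := le_trans (min_le_left _ _) (min_le_right _ _)
      linarith
    · exact le_trans (le_max_right b c) (le_max_left _ 1)
  -- ratio as exponential
  have hratio : ∀ n : ℕ, 1 ≤ n →
      ((((n : ℝ) + b) * ((n : ℝ) + (b + 1) / 2) * ((n : ℝ) + c / 2)) /
        (((n : ℝ) + c) * ((n : ℝ) + (c + 1) / 2) * ((n : ℝ) + b / 2)))
      = Real.exp (g (n:ℝ) b - g (n:ℝ) c) := by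
    intro n hn
    have hn1 : (1:ℝ) ≤ (n:ℝ) := by exact_mod_cast hn
    have p1 : (0:ℝ) < (n:ℝ) + b := by linarith
    have p2 : (0:ℝ) < (n:ℝ) + (b+1)/2 := by linarith
    have p3 : (0:ℝ) < (n:ℝ) + c/2 := by linarith
    have p4 : (0:ℝ) < (n:ℝ) + c := by linarith
    have p5 : (0:ℝ) < (n:ℝ) + (c+1)/2 := by linarith
    have p6 : (0:ℝ) < (n:ℝ) + b/2 := by linarith
    have hpos : (0:ℝ) < (((n : ℝ) + b) * ((n : ℝ) + (b + 1) / 2) * ((n : ℝ) + c / 2)) /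
        (((n : ℝ) + c) * ((n : ℝ) + (c + 1) / 2) * ((n : ℝ) + b / 2)) := by positivity
    rw [← Real.exp_log hpos]
    congr 1
    rw [Real.log_div (by positivity) (by positivity),
        Real.log_mul (by positivity) p3.ne', Real.log_mul p1.ne' p2.ne',
        Real.log_mul (by positivity) p6.ne', Real.log_mul p4.ne' p5.ne']
    unfold g
    rw [show (n:ℝ) + (b+1)/2 = (2*(n:ℝ) + b + 1)/2 by ring,
        show (n:ℝ) + c/2 = (2*(n:ℝ) + c)/2 by ring,
        show (n:ℝ) + (c+1)/2 = (2*(n:ℝ) + c + 1)/2 by ring,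
        show (n:ℝ) + b/2 = (2*(n:ℝ) + b)/2 by ring,
        Real.log_div (by linarith : (0:ℝ) < 2*(n:ℝ)+b+1).ne' (by norm_num),
        Real.log_div (by linarith : (0:ℝ) < 2*(n:ℝ)+c).ne' (by norm_num),
        Real.log_div (by linarith : (0:ℝ) < 2*(n:ℝ)+c+1).ne' (by norm_num),
        Real.log_div (by linarith : (0:ℝ) < 2*(n:ℝ)+b).ne' (by norm_num)]
    ring
  -- product formula
  have hprod : ∀ N : ℕ, (∏ n ∈ Finset.Icc 1 N,
      ((((n : ℝ) + b) * ((n : ℝ) + (b + 1) / 2) * ((n : ℝ) + c / 2)) /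
        (((n : ℝ) + c) * ((n : ℝ) + (c + 1) / 2) * ((n : ℝ) + b / 2))) ^ (u n))
      = Real.exp (Psi N b - Psi N c) * ((c + 1) / (b + 1)) := by
    intro N
    induction N with
    | zero =>
      rw [show Finset.Icc 1 0 = (∅ : Finset ℕ) by rfl, Finset.prod_empty]
      have h0 : ∀ y : ℝ, Psi 0 y = Real.log (1 + y) := by
        intro y; unfold Psi; simp
      rw [h0, h0, Real.exp_sub, Real.exp_log (by linarith), Real.exp_log (by linarith)]
      rw [div_mul_div_comm]
      rw [eq_comm, div_eq_one_iff_eq (mul_pos (by linarith : (0:ℝ) < 1+c) (by linarith : (0:ℝ) < b+1)).ne']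
      ring
    | succ N IH =>
      rw [Finset.prod_Icc_succ_top (by omega : 1 ≤ N + 1), IH, hratio (N+1) (by omega)]
      rcases u_pm (N+1) with h | h
      · have e : Psi (N+1) b - Psi (N+1) c
            = (Psi N b - Psi N c) + (g ((N+1:ℕ):ℝ) b - g ((N+1:ℕ):ℝ) c) := by
          rw [Psi_succ, Psi_succ, h]
          push_cast
          ring
        rw [e, h, zpow_one, Real.exp_add]
        ring
      · have e : Psi (N+1) b - Psi (N+1) c
            = (Psi N b - Psi N c) - (g ((N+1:ℕ):ℝ) b - g ((N+1:ℕ):ℝ) c) := by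
          rw [Psi_succ, Psi_succ, h]
          push_cast
          ring
        have eexp : Real.exp (Psi N b - Psi N c - (g ((N+1:ℕ):ℝ) b - g ((N+1:ℕ):ℝ) c))
            = Real.exp (Psi N b - Psi N c) * (Real.exp (g ((N+1:ℕ):ℝ) b - g ((N+1:ℕ):ℝ) c))⁻¹ := by
          rw [sub_eq_add_neg (Psi N b - Psi N c), Real.exp_add, Real.exp_neg]
        rw [e, h, zpow_neg, zpow_one, eexp]
        ring
  -- convergence
  have hdiff : Tendsto (fun N : ℕ => Psi N b - Psi N c) atTop (𝓝 0) := by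
    apply squeeze_zero_norm' (a := fun N : ℕ => (((12 + 1/δ^2) + 6) * |b - c|) / (N:ℝ))
    · rw [Filter.eventually_atTop]
      refine ⟨1, fun N hN => ?_⟩
      have hP : ∀ w ∈ Set.Icc (δ-1) K, |Phi N w| ≤ ((12 + 1/δ^2) + 6)/(N:ℝ) :=
        fun w hw => phi_bound hδ0 hδ1 hK1 N hN hw
      have := psi_diff hδ0 hδ1 hK1 N hP hcS hbS
      rw [Real.norm_eq_abs]
      calc |Psi N b - Psi N c| ≤ ((12 + 1/δ^2) + 6)/(N:ℝ) * |b - c| := this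
        _ = (((12 + 1/δ^2) + 6) * |b - c|) / (N:ℝ) := by rw [div_mul_eq_mul_div]
    · exact tendsto_const_div_atTop_nhds_zero_nat _
  have hexp : Tendsto (fun N : ℕ => Real.exp (Psi N b - Psi N c)) atTop (𝓝 1) := by
    have := (Real.continuous_exp.tendsto 0).comp hdiff
    simpa [Function.comp_def] using this
  have hfin := hexp.mul_const ((c + 1) / (b + 1))
  rw [one_mul] at hfin
  exact Tendsto.congr (fun N => (hprod N).symm) hfin
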